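/- The Jaccard distance d(A,B) = 1 − |A∩B|/|A∪B| on finite sets satisfies the triangle inequality: d(A,C) ≤ d(A,B) + d(B,C). -/

import Mathlib

open Finset

lemma jaccard_key_card {α : Type*} [DecidableEq α] (A B C : Finset α) :
    (A ∪ B ∪ C).card + (A ∩ B).card + (B ∩ C).card ≤
      (A ∪ B).card + (B ∪ C).card + (A ∩ C).card := by
  have h1 := Finset.card_union_add_card_inter (A ∪ B) C
  have heq : (A ∪ B) ∩ C = (A ∩ C) ∪ (B ∩ C) := by ext x; simp only [Finset.mem_inter, Finset.mem_union]; tauto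
  have h2 := Finset.card_union_add_card_inter (A ∩ C) (B ∩ C)
  have he2 : (A ∩ C) ∩ (B ∩ C) = A ∩ B ∩ C := by ext x; simp only [Finset.mem_inter]; tauto
  have h3 := Finset.card_union_add_card_inter (A ∩ B) (B ∩ C)
  have he3 : (A ∩ B) ∩ (B ∩ C) = A ∩ B ∩ C := by ext x; simp only [Finset.mem_inter]; tauto
  have h4 : ((A ∩ B) ∪ (B ∩ C)).card ≤ B.card := by
    apply Finset.card_le_card; intro x; simp; tauto
  have h5 : (A ∩ B ∩ C).card ≤ (A ∩ C).card := by
    apply Finset.card_le_card; intro x; simp; tauto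
  have h6 := Finset.card_union_add_card_inter B C
  rw [heq] at h1
  rw [he2] at h2
  rw [he3] at h3
  omega

/-- The Jaccard distance d(A,B) = 1 − |A∩B|/|A∪B| (with d(∅,∅) = 0)
    satisfies the triangle inequality. -/
theorem jaccard_distance_triangle {α : Type*} [DecidableEq α] (A B C : Finset α) :
    let d : Finset α → Finset α → ℝ := fun X Y =>
      if X ∪ Y = ∅ then 0 else 1 - ((X ∩ Y).card : ℝ) / (X ∪ Y).card
    d A C ≤ d A B + d B C := by
  intro d
  have hd : ∀ X Y : Finset α,
      d X Y = if X ∪ Y = ∅ then 0 else 1 - ((X ∩ Y).card : ℝ) / (X ∪ Y).card :=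
    fun _ _ => rfl
  have hnonneg : ∀ X Y : Finset α, 0 ≤ d X Y := by
    intro X Y
    rw [hd]
    split_ifs with h
    · exact le_refl 0
    · have hpos : (0 : ℝ) < (X ∪ Y).card := by
        exact_mod_cast Finset.card_pos.mpr (Finset.nonempty_iff_ne_empty.mpr h)
      have hle : ((X ∩ Y).card : ℝ) ≤ (X ∪ Y).card := by
        exact_mod_cast Finset.card_le_card (Finset.inter_subset_union)
      have : ((X ∩ Y).card : ℝ) / (X ∪ Y).card ≤ 1 := by
        rw [div_le_one hpos]; exact hle
      linarith
  by_cases hAC : A ∪ C = ∅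
  · rw [hd, if_pos hAC]
    exact add_nonneg (hnonneg A B) (hnonneg B C)
  by_cases hAB : A ∪ B = ∅
  · have hA : A = ∅ := (Finset.union_eq_empty.mp hAB).1
    have hB : B = ∅ := (Finset.union_eq_empty.mp hAB).2
    subst hA; subst hB
    simp [hd]
  by_cases hBC : B ∪ C = ∅
  · have hB : B = ∅ := (Finset.union_eq_empty.mp hBC).1
    have hC : C = ∅ := (Finset.union_eq_empty.mp hBC).2
    subst hB; subst hC
    simp [hd]
  -- main case
  rw [hd, hd, hd, if_neg hAC, if_neg hAB, if_neg hBC]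
  set w : ℝ := ((A ∪ B ∪ C).card : ℝ) with hw
  set uAB : ℝ := ((A ∪ B).card : ℝ) with huAB
  set uBC : ℝ := ((B ∪ C).card : ℝ) with huBC
  set uAC : ℝ := ((A ∪ C).card : ℝ) with huAC
  set iAB : ℝ := ((A ∩ B).card : ℝ) with hiAB
  set iBC : ℝ := ((B ∩ C).card : ℝ) with hiBC
  set iAC : ℝ := ((A ∩ C).card : ℝ) with hiAC
  have hABpos : (0 : ℝ) < uAB := by
    rw [huAB]; exact_mod_cast Finset.card_pos.mpr (Finset.nonempty_iff_ne_empty.mpr hAB)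
  have hBCpos : (0 : ℝ) < uBC := by
    rw [huBC]; exact_mod_cast Finset.card_pos.mpr (Finset.nonempty_iff_ne_empty.mpr hBC)
  have hACpos : (0 : ℝ) < uAC := by
    rw [huAC]; exact_mod_cast Finset.card_pos.mpr (Finset.nonempty_iff_ne_empty.mpr hAC)
  have hwpos : (0 : ℝ) < w := by
    have : A ∪ B ⊆ A ∪ B ∪ C := Finset.subset_union_left
    have hle : uAB ≤ w := by rw [huAB, hw]; exact_mod_cast Finset.card_le_card this
    linarith
  have hAB_le_w : uAB ≤ w := by
    rw [huAB, hw]; exact_mod_cast Finset.card_le_card (Finset.subset_union_left : A ∪ B ⊆ A ∪ B ∪ C)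
  have hBC_le_w : uBC ≤ w := by
    have : B ∪ C ⊆ A ∪ B ∪ C := by intro x; simp; tauto
    rw [huBC, hw]; exact_mod_cast Finset.card_le_card this
  have hAC_le_w : uAC ≤ w := by
    have : A ∪ C ⊆ A ∪ B ∪ C := by intro x; simp; tauto
    rw [huAC, hw]; exact_mod_cast Finset.card_le_card this
  have hiAB_le : iAB ≤ uAB := by
    rw [hiAB, huAB]; exact_mod_cast Finset.card_le_card (Finset.inter_subset_union : A ∩ B ⊆ A ∪ B)
  have hiBC_le : iBC ≤ uBC := by
    rw [hiBC, huBC]; exact_mod_cast Finset.card_le_card (Finset.inter_subset_union : B ∩ C ⊆ B ∪ C)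
  have hiAC_nonneg : (0 : ℝ) ≤ iAC := by positivity
  have hkey : w + iAB + iBC ≤ uAB + uBC + iAC := by
    rw [hw, hiAB, hiBC, huAB, huBC, hiAC]; exact_mod_cast jaccard_key_card A B C
  have step1 : iAB / uAB ≤ (iAB + w - uAB) / w := by
    rw [div_le_div_iff₀ hABpos hwpos]
    nlinarith [mul_nonneg (sub_nonneg.2 hAB_le_w) (sub_nonneg.2 hiAB_le)]
  have step2 : iBC / uBC ≤ (iBC + w - uBC) / w := by
    rw [div_le_div_iff₀ hBCpos hwpos]
    nlinarith [mul_nonneg (sub_nonneg.2 hBC_le_w) (sub_nonneg.2 hiBC_le)]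
  have step3 : iAC / w ≤ iAC / uAC := by
    rw [div_le_div_iff₀ hwpos hACpos]
    nlinarith
  have step4 : (iAB + w - uAB) / w + (iBC + w - uBC) / w ≤ 1 + iAC / w := by
    rw [← add_div, ← sub_nonneg]
    have : 1 + iAC / w - ((iAB + w - uAB) + (iBC + w - uBC)) / w
        = ((w + iAC) - ((iAB + w - uAB) + (iBC + w - uBC))) / w := by
      field_simp
    rw [this]
    apply div_nonneg _ (le_of_lt hwpos)
    linarith
  linarith
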